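/- Let A be a Z-graded algebra over a commutative ring K and d an integer. Given a bibracket ⟪-,-⟫ on A, define the induced tribracket on A⊗A⊗A as the sum over i = 0, 1, 2 of P₃₁₂ⁱ ∘ (⟪-,-⟫ ⊗ id_A) ∘ (id_A ⊗ ⟪-,-⟫) ∘ P₃₁₂,d⁻ⁱ, where P₃₁₂ and P₃₁₂,d are the graded and d-graded cyclic permutations of A⊗A⊗A. Suppose ⟪-,-⟫ is a Gerstenhaber bibracket of degree d, i.e., it is d-antisymmetric, satisfies the d-graded Leibniz rules, has degree d, and its induced tribracket is zero. Then the associated bracket ⟨a,b⟩ = ⟪a,b⟫'⟪a,b⟫'' satisfies, for all homogeneous a, b, c in A: ⟨⟨a,b⟩, c⟩ = ⟨a, ⟨b,c⟩⟩ - (-1)^{(|a|+d)(|b|+d)} ⟨b, ⟨a,c⟩⟩. -/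

import Mathlib

open scoped TensorProduct

noncomputable section

/-- The sign `(-1)^n`, for `n : ℤ`, as an element of the commutative ring `K`. -/
def sgn (K : Type*) [CommRing K] (n : ℤ) : K := ((n.negOnePow : ℤ) : K)

variable {K : Type*} [CommRing K] {A : Type*} [Ring A] [Algebra K A]
variable (𝒜 : ℤ → Submodule K A) [GradedAlgebra 𝒜]

/-- The `K`-linear endomorphism of `A` multiplying the degree-`p` component by `(-1)^{p·k}`. -/
def twist (k : ℤ) : A →ₗ[K] A :=
  (DirectSum.toModule K ℤ A fun p => sgn K (p * k) • (𝒜 p).subtype) ∘ₗ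
    (DirectSum.decomposeAlgEquiv 𝒜).toLinearMap

/-- The graded flip `P₂₁` of `A ⊗ A`, sending `x' ⊗ x''` (with `x', x''` homogeneous)
to `(-1)^{|x'||x''|} x'' ⊗ x'`. -/
def gflip : A ⊗[K] A →ₗ[K] A ⊗[K] A :=
  TensorProduct.lift
    ((DirectSum.toModule K ℤ (A →ₗ[K] A ⊗[K] A) fun p =>
        ((LinearMap.llcomp K A A (A ⊗[K] A)).flip (twist 𝒜 p)).comp
          ((TensorProduct.mk K A A).flip.comp (𝒜 p).subtype)) ∘ₗ
      (DirectSum.decomposeAlgEquiv 𝒜).toLinearMap)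

/-- The `d`-graded flip `P₂₁,d`, sending `a ⊗ b` (homogeneous) to
`(-1)^{(|a|+d)(|b|+d)} b ⊗ a`. -/
def P21d (d : ℤ) : A ⊗[K] A →ₗ[K] A ⊗[K] A :=
  sgn K (d * d) • (gflip 𝒜 ∘ₗ TensorProduct.map (twist 𝒜 d) (twist 𝒜 d))

/-- Outer left action of `A` on `A ⊗ A`: `a ⬝ (x' ⊗ x'') = (a x') ⊗ x''`. -/
def outL (a : A) : A ⊗[K] A →ₗ[K] A ⊗[K] A := LinearMap.rTensor A (LinearMap.mulLeft K a)

/-- Outer right action of `A` on `A ⊗ A`: `(x' ⊗ x'') ⬝ b = x' ⊗ (x'' b)`. -/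
def outR (b : A) : A ⊗[K] A →ₗ[K] A ⊗[K] A := LinearMap.lTensor A (LinearMap.mulRight K b)

/-- Inner left action of a homogeneous `a` of degree `p` on `A ⊗ A`:
`a * (x' ⊗ x'') = (-1)^{|a||x'|} x' ⊗ (a x'')`. -/
def innL (p : ℤ) (a : A) : A ⊗[K] A →ₗ[K] A ⊗[K] A :=
  (LinearMap.lTensor A (LinearMap.mulLeft K a)) ∘ₗ (LinearMap.rTensor A (twist 𝒜 p))

/-- Inner right action of a homogeneous `b` of degree `q` on `A ⊗ A`:
`(x' ⊗ x'') * b = (-1)^{|b||x''|} (x' b) ⊗ x''`. -/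
def innR (q : ℤ) (b : A) : A ⊗[K] A →ₗ[K] A ⊗[K] A :=
  (LinearMap.rTensor A (LinearMap.mulRight K b)) ∘ₗ (LinearMap.lTensor A (twist 𝒜 q))

/-- The degree-`n` part `⊕_{i+j=n} A^i ⊗ A^j` of `A ⊗ A`, as the span of
homogeneous pure tensors of total degree `n`. -/
def degSub (n : ℤ) : Submodule K (A ⊗[K] A) :=
  Submodule.span K
    {z | ∃ (i j : ℤ) (x' x'' : A), i + j = n ∧ x' ∈ 𝒜 i ∧ x'' ∈ 𝒜 j ∧ z = x' ⊗ₜ[K] x''}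

/-- `P₂₃`: graded flip of the last two factors of `A ⊗ A ⊗ A`. -/
def P23 : A ⊗[K] (A ⊗[K] A) →ₗ[K] A ⊗[K] (A ⊗[K] A) := LinearMap.lTensor A (gflip 𝒜)

/-- `P₁₂`: graded flip of the first two factors of `A ⊗ A ⊗ A`. -/
def P12 : A ⊗[K] (A ⊗[K] A) →ₗ[K] A ⊗[K] (A ⊗[K] A) :=
  (TensorProduct.assoc K A A A).toLinearMap ∘ₗ
    (LinearMap.rTensor A (gflip 𝒜)) ∘ₗ (TensorProduct.assoc K A A A).symm.toLinearMap

/-- The graded cyclic permutation `P₃₁₂ : a ⊗ b ⊗ c ↦ (-1)^{|c|(|a|+|b|)} c ⊗ a ⊗ b`. -/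
def P312 : A ⊗[K] (A ⊗[K] A) →ₗ[K] A ⊗[K] (A ⊗[K] A) := P12 𝒜 ∘ₗ P23 𝒜

/-- The `d`-graded cyclic permutation `P₃₁₂,d`, defined with the degrees `|·|+d`. -/
def P312d (d : ℤ) : A ⊗[K] (A ⊗[K] A) →ₗ[K] A ⊗[K] (A ⊗[K] A) :=
  P312 𝒜 ∘ₗ TensorProduct.map (twist 𝒜 d) (LinearMap.rTensor A (twist 𝒜 d))

/-- `F ⊗ id` on `A ⊗ (A ⊗ A)`. -/
def Fleft (F : A ⊗[K] A →ₗ[K] A ⊗[K] A) :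
    A ⊗[K] (A ⊗[K] A) →ₗ[K] A ⊗[K] (A ⊗[K] A) :=
  (TensorProduct.assoc K A A A).toLinearMap ∘ₗ
    (LinearMap.rTensor A F) ∘ₗ (TensorProduct.assoc K A A A).symm.toLinearMap

/-- The tribracket induced by a bibracket `F`:
`∑_{i=0}^{2} P₃₁₂ⁱ ∘ (F ⊗ id) ∘ (id ⊗ F) ∘ P₃₁₂,d⁻ⁱ`.  Since the `d`-graded cyclic
permutation `P₃₁₂,d` has order `3`, its inverse is its square. -/
def tribracket (d : ℤ) (F : A ⊗[K] A →ₗ[K] A ⊗[K] A) :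
    A ⊗[K] (A ⊗[K] A) →ₗ[K] A ⊗[K] (A ⊗[K] A) :=
  Fleft F ∘ₗ LinearMap.lTensor A F +
    P312 𝒜 ∘ₗ Fleft F ∘ₗ LinearMap.lTensor A F ∘ₗ (P312d 𝒜 d ∘ₗ P312d 𝒜 d) +
    (P312 𝒜 ∘ₗ P312 𝒜) ∘ₗ Fleft F ∘ₗ LinearMap.lTensor A F ∘ₗ P312d 𝒜 d


lemma sgn_mul_sgn (m n : ℤ) : sgn K m * sgn K n = sgn K (m + n) := by
  simp [sgn, Int.negOnePow_add, mul_comm]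

lemma sgn_even {m : ℤ} (h : Even m) : sgn (K := K) m = 1 := by
  rw [sgn, Int.negOnePow_even _ h, Units.val_one, Int.cast_one]

lemma sgn_sq (m : ℤ) : sgn K m * sgn K m = 1 := by
  rw [sgn_mul_sgn]; exact sgn_even ⟨m, rfl⟩

lemma sgn_congr {m n : ℤ} (h : Even (m - n)) : sgn (K := K) m = sgn K n := by
  have hm : m = n + (m - n) := by ring
  rw [hm, ← sgn_mul_sgn, sgn_even h, mul_one]

lemma twist_apply {p : ℤ} (k : ℤ) {x : A} (hx : x ∈ 𝒜 p) :
    twist 𝒜 k x = sgn K (p * k) • x := by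
  simp only [twist, LinearMap.comp_apply, AlgEquiv.toLinearMap_apply,
    DirectSum.decomposeAlgEquiv_apply, DirectSum.decompose_of_mem 𝒜 hx, ← DirectSum.lof_eq_of K,
    DirectSum.toModule_lof]
  rfl

lemma gflip_tmul {p q : ℤ} {x y : A} (hx : x ∈ 𝒜 p) (hy : y ∈ 𝒜 q) :
    gflip 𝒜 (x ⊗ₜ[K] y) = sgn K (p * q) • (y ⊗ₜ[K] x) := by
  simp only [gflip, TensorProduct.lift.tmul, LinearMap.comp_apply, AlgEquiv.toLinearMap_apply,
    DirectSum.decomposeAlgEquiv_apply, DirectSum.decompose_of_mem 𝒜 hx, ← DirectSum.lof_eq_of K,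
    DirectSum.toModule_lof]
  simp only [LinearMap.comp_apply, LinearMap.flip_apply, LinearMap.llcomp_apply,
    Submodule.subtype_apply, TensorProduct.mk_apply]
  rw [twist_apply 𝒜 p hy]
  rw [TensorProduct.smul_tmul', mul_comm q p]

/-- Induction on `A ⊗ A` via homogeneous pure tensors. -/
lemma tmul_induction {P : A ⊗[K] A → Prop} (h0 : P 0)
    (hadd : ∀ x y, P x → P y → P (x + y))
    (hhom : ∀ (i j : ℤ) (x y : A), x ∈ 𝒜 i → y ∈ 𝒜 j → P (x ⊗ₜ[K] y)) :
    ∀ z, P z := by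
  intro z
  induction z using TensorProduct.induction_on with
  | zero => exact h0
  | add u v hu hv => exact hadd _ _ hu hv
  | tmul x y =>
    induction x using DirectSum.Decomposition.inductionOn 𝒜 with
    | zero => simpa using h0
    | @homogeneous i x =>
      induction y using DirectSum.Decomposition.inductionOn 𝒜 with
      | zero => simpa using h0
      | @homogeneous j y => exact hhom i j x y x.2 y.2
      | add y1 y2 hy1 hy2 =>
        rw [TensorProduct.tmul_add]; exact hadd _ _ hy1 hy2
    | add x1 x2 hx1 hx2 =>
      rw [TensorProduct.add_tmul]; exact hadd _ _ hx1 hx2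

lemma gflip_gflip (z : A ⊗[K] A) : gflip 𝒜 (gflip 𝒜 z) = z := by
  induction z using tmul_induction 𝒜 with
  | h0 => simp
  | hadd x y hx hy => simp [map_add, hx, hy]
  | hhom i j x y hx hy =>
    rw [gflip_tmul 𝒜 hx hy, map_smul, gflip_tmul 𝒜 hy hx, smul_smul, mul_comm j i, sgn_sq,
      one_smul]

lemma P23_tmul {i j : ℤ} (a : A) {x y : A} (hx : x ∈ 𝒜 i) (hy : y ∈ 𝒜 j) :
    P23 𝒜 (a ⊗ₜ[K] (x ⊗ₜ[K] y)) = sgn K (i * j) • (a ⊗ₜ[K] (y ⊗ₜ[K] x)) := by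
  simp [P23, gflip_tmul 𝒜 hx hy, TensorProduct.tmul_smul]

lemma P12_tmul {p i : ℤ} {a x : A} (ha : a ∈ 𝒜 p) (hx : x ∈ 𝒜 i) (y : A) :
    P12 𝒜 (a ⊗ₜ[K] (x ⊗ₜ[K] y)) = sgn K (p * i) • (x ⊗ₜ[K] (a ⊗ₜ[K] y)) := by
  simp only [P12, LinearMap.comp_apply, LinearEquiv.coe_coe, TensorProduct.assoc_symm_tmul,
    LinearMap.rTensor_tmul, gflip_tmul 𝒜 ha hx]
  simp only [← TensorProduct.smul_tmul', map_smul, TensorProduct.assoc_tmul]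

lemma P312_tmul {p q r : ℤ} {x y z : A} (hx : x ∈ 𝒜 p) (hy : y ∈ 𝒜 q) (hz : z ∈ 𝒜 r) :
    P312 𝒜 (x ⊗ₜ[K] (y ⊗ₜ[K] z)) = sgn K (r * (p + q)) • (z ⊗ₜ[K] (x ⊗ₜ[K] y)) := by
  rw [P312, LinearMap.comp_apply, P23_tmul 𝒜 x hy hz, map_smul, P12_tmul 𝒜 hx hz y,
    smul_smul, sgn_mul_sgn]
  congr 2
  ring

lemma P312d_tmul (d : ℤ) {p q r : ℤ} {x y z : A} (hx : x ∈ 𝒜 p) (hy : y ∈ 𝒜 q) (hz : z ∈ 𝒜 r) :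
    P312d 𝒜 d (x ⊗ₜ[K] (y ⊗ₜ[K] z)) = sgn K ((r + d) * (p + q)) • (z ⊗ₜ[K] (x ⊗ₜ[K] y)) := by
  rw [P312d, LinearMap.comp_apply, TensorProduct.map_tmul, LinearMap.rTensor_tmul,
    twist_apply 𝒜 d hx, twist_apply 𝒜 d hy]
  simp only [← TensorProduct.smul_tmul', TensorProduct.tmul_smul, map_smul]
  rw [P312_tmul 𝒜 hx hy hz, smul_smul, smul_smul, sgn_mul_sgn, sgn_mul_sgn]
  congr 2
  ring

set_option maxHeartbeats 1000000
set_option synthInstance.maxHeartbeats 200000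

lemma degSub_induction {n : ℤ} {P : A ⊗[K] A → Prop} (h0 : P 0)
    (hadd : ∀ x y, P x → P y → P (x + y)) (hsmul : ∀ (r : K) x, P x → P (r • x))
    (hhom : ∀ (i j : ℤ) (x y : A), i + j = n → x ∈ 𝒜 i → y ∈ 𝒜 j → P (x ⊗ₜ[K] y)) :
    ∀ z ∈ degSub 𝒜 n, P z := by
  intro z hz
  refine Submodule.span_induction ?_ h0 (fun x y _ _ hx hy => hadd x y hx hy)
    (fun r x _ hx => hsmul r x hx) hz
  rintro x ⟨i, j, x', x'', hij, hx', hx'', rfl⟩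
  exact hhom i j x' x'' hij hx' hx''

def mmm : A ⊗[K] (A ⊗[K] A) →ₗ[K] A :=
  LinearMap.mul' K A ∘ₗ LinearMap.lTensor A (LinearMap.mul' K A)

lemma mmm_tmul (x y z : A) : mmm (x ⊗ₜ[K] (y ⊗ₜ[K] z)) = x * (y * z) := by
  simp [mmm]

lemma mmm_assoc (X : A ⊗[K] A) (w : A) :
    mmm ((TensorProduct.assoc K A A A) (X ⊗ₜ[K] w)) = LinearMap.mul' K A X * w := by
  induction X using TensorProduct.induction_on with
  | zero => simp [TensorProduct.zero_tmul]
  | tmul x y => rw [TensorProduct.assoc_tmul, mmm_tmul]; simp [mul_assoc]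
  | add u v hu hv =>
    rw [TensorProduct.add_tmul, map_add, map_add, hu, hv, map_add, add_mul]

lemma mul'_outL (a : A) (z : A ⊗[K] A) :
    LinearMap.mul' K A (outL a z) = a * LinearMap.mul' K A z := by
  induction z using TensorProduct.induction_on with
  | zero => simp
  | tmul x y => simp [outL, mul_assoc]
  | add u v hu hv => simp only [map_add, hu, hv, mul_add]

lemma mul'_outR (b : A) (z : A ⊗[K] A) :
    LinearMap.mul' K A (outR b z) = LinearMap.mul' K A z * b := by
  induction z using TensorProduct.induction_on with
  | zero => simp
  | tmul x y => simp [outR, mul_assoc]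
  | add u v hu hv => simp only [map_add, hu, hv, add_mul]

lemma innL_mmm {ρ : ℤ} {r : A} (hr : r ∈ 𝒜 ρ) (z : A ⊗[K] A) :
    LinearMap.mul' K A (innL 𝒜 ρ r z) = mmm (P12 𝒜 (r ⊗ₜ[K] z)) := by
  induction z using tmul_induction 𝒜 with
  | h0 => simp
  | hadd x y hx hy => simp only [map_add, TensorProduct.tmul_add, hx, hy]
  | hhom i j x y hx hy =>
    rw [innL, LinearMap.comp_apply, LinearMap.rTensor_tmul, twist_apply 𝒜 ρ hx,
      P12_tmul 𝒜 hr hx y, map_smul, mmm_tmul]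
    simp only [← TensorProduct.smul_tmul', map_smul, LinearMap.lTensor_tmul]
    rw [mul_comm i ρ]
    simp [mul_assoc]

lemma innR_mmm {ω : ℤ} {w : A} (hw : w ∈ 𝒜 ω) {m : ℤ} :
    ∀ z ∈ degSub 𝒜 m,
      LinearMap.mul' K A (innR 𝒜 ω w z) = sgn K (ω * m) • mmm (P12 𝒜 (w ⊗ₜ[K] z)) := by
  refine degSub_induction 𝒜 (by simp) ?_ ?_ ?_
  · intro x y hx hy
    simp only [map_add, TensorProduct.tmul_add, hx, hy, smul_add]
  · intro r x hx
    simp only [map_smul, TensorProduct.tmul_smul, hx, smul_comm r]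
  · intro i j x y hij hx hy
    rw [innR, LinearMap.comp_apply, LinearMap.lTensor_tmul, twist_apply 𝒜 ω hy,
      TensorProduct.tmul_smul, map_smul, map_smul, LinearMap.rTensor_tmul,
      P12_tmul 𝒜 hw hx y, map_smul, mmm_tmul, smul_smul, sgn_mul_sgn]
    simp only [LinearMap.mul'_apply, LinearMap.mulRight_apply]
    rw [mul_assoc x w y, ← mul_assoc x w y]
    refine congrArg (· • (x * w * y)) ?_
    exact sgn_congr ⟨-(ω * i), by rw [← hij]; ring⟩

lemma L_sub1 {τ : ℤ} {t : A} (ht : t ∈ 𝒜 τ) {m : ℤ} :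
    ∀ X ∈ degSub 𝒜 m,
      mmm (P312 𝒜 ((TensorProduct.assoc K A A A) (X ⊗ₜ[K] t))) =
        sgn K (τ * m) • (t * LinearMap.mul' K A X) := by
  refine degSub_induction 𝒜 (by simp [TensorProduct.zero_tmul]) ?_ ?_ ?_
  · intro x y hx hy
    simp only [TensorProduct.add_tmul, map_add, hx, hy, mul_add, smul_add]
  · intro r x hx
    simp only [← TensorProduct.smul_tmul', map_smul, hx, mul_smul_comm, smul_comm r]
  · intro i j x y hij hx hy
    rw [TensorProduct.assoc_tmul, P312_tmul 𝒜 hx hy ht, map_smul, mmm_tmul, hij]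
    simp [mul_assoc]

lemma L_sub2 {ω : ℤ} {w : A} (hw : w ∈ 𝒜 ω) (v : A ⊗[K] A) :
    mmm (P312 𝒜 (P312 𝒜 ((TensorProduct.assoc K A A A) ((gflip 𝒜 v) ⊗ₜ[K] w)))) =
      mmm (LinearMap.lTensor A (TensorProduct.mk K A A w ∘ₗ twist 𝒜 ω) v) := by
  induction v using tmul_induction 𝒜 with
  | h0 => simp [TensorProduct.zero_tmul]
  | hadd x y hx hy => simp only [map_add, TensorProduct.add_tmul, hx, hy]
  | hhom i j x y hx hy =>
    rw [gflip_tmul 𝒜 hx hy]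
    simp only [← TensorProduct.smul_tmul', map_smul]
    rw [TensorProduct.assoc_tmul, P312_tmul 𝒜 hy hx hw, map_smul, map_smul,
      P312_tmul 𝒜 hw hy hx, map_smul, mmm_tmul]
    rw [LinearMap.lTensor_tmul, LinearMap.comp_apply, twist_apply 𝒜 ω hy, map_smul,
      TensorProduct.mk_apply, TensorProduct.tmul_smul, map_smul, mmm_tmul]
    rw [smul_smul, smul_smul, sgn_mul_sgn, sgn_mul_sgn]
    refine congrArg (· • (x * (w * y))) ?_
    exact sgn_congr ⟨i * j + ω * i, by ring⟩

lemma L_sub3 {ω : ℤ} {w : A} (hw : w ∈ 𝒜 ω) {m : ℤ} :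
    ∀ v ∈ degSub 𝒜 m,
      mmm (LinearMap.lTensor A (TensorProduct.mk K A A w ∘ₗ twist 𝒜 ω) v) =
        sgn K (ω * m) • mmm (P12 𝒜 (w ⊗ₜ[K] v)) := by
  refine degSub_induction 𝒜 (by simp) ?_ ?_ ?_
  · intro x y hx hy
    simp only [map_add, TensorProduct.tmul_add, hx, hy, smul_add]
  · intro r x hx
    simp only [map_smul, TensorProduct.tmul_smul, hx, smul_comm r]
  · intro i j x y hij hx hy
    rw [LinearMap.lTensor_tmul, LinearMap.comp_apply, twist_apply 𝒜 ω hy, map_smul,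
      TensorProduct.mk_apply, TensorProduct.tmul_smul, map_smul, mmm_tmul,
      P12_tmul 𝒜 hw hx y, map_smul, mmm_tmul, smul_smul, sgn_mul_sgn]
    refine congrArg (· • (x * (w * y))) ?_
    exact sgn_congr ⟨-(ω * i), by rw [← hij]; ring⟩


def braF (F : A ⊗[K] A →ₗ[K] A ⊗[K] A) (a : A) : A →ₗ[K] A :=
  LinearMap.mul' K A ∘ₗ F ∘ₗ TensorProduct.mk K A A a

def rmk (c : A) : A →ₗ[K] A ⊗[K] A := (TensorProduct.mk K A A).flip c

lemma braF_apply (F : A ⊗[K] A →ₗ[K] A ⊗[K] A) (a u : A) :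
    braF F a u = LinearMap.mul' K A (F (a ⊗ₜ[K] u)) := rfl

lemma rmk_apply (c r : A) : rmk (K := K) (A := A) c r = r ⊗ₜ[K] c := rfl

lemma Fleft_tmul (F : A ⊗[K] A →ₗ[K] A ⊗[K] A) (a u v : A) :
    Fleft F (a ⊗ₜ[K] (u ⊗ₜ[K] v)) =
      (TensorProduct.assoc K A A A) ((F (a ⊗ₜ[K] u)) ⊗ₜ[K] v) := by
  simp [Fleft]

section WithF
variable (d : ℤ) (F : A ⊗[K] A →ₗ[K] A ⊗[K] A)

lemma antisym_tmul (hanti : gflip 𝒜 ∘ₗ F ∘ₗ P21d 𝒜 d = -F) {p q : ℤ} {x y : A}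
    (hx : x ∈ 𝒜 p) (hy : y ∈ 𝒜 q) :
    F (y ⊗ₜ[K] x) = -(sgn K ((p + d) * (q + d)) • gflip 𝒜 (F (x ⊗ₜ[K] y))) := by
  have h := LinearMap.congr_fun hanti (x ⊗ₜ[K] y)
  simp only [LinearMap.comp_apply, LinearMap.neg_apply] at h
  have hp : P21d 𝒜 d (x ⊗ₜ[K] y) = sgn K ((p + d) * (q + d)) • (y ⊗ₜ[K] x) := by
    rw [P21d, LinearMap.smul_apply, LinearMap.comp_apply, TensorProduct.map_tmul,
      twist_apply 𝒜 d hx, twist_apply 𝒜 d hy]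
    simp only [← TensorProduct.smul_tmul', TensorProduct.tmul_smul, map_smul]
    rw [gflip_tmul 𝒜 hx hy, smul_smul, smul_smul, smul_smul, sgn_mul_sgn, sgn_mul_sgn,
      sgn_mul_sgn]
    refine congrArg (· • (y ⊗ₜ[K] x)) (congrArg (sgn K) ?_)
    ring
  rw [hp, map_smul, map_smul] at h
  -- h : sgn e • gflip (F (y ⊗ₜ x)) = -(F (x ⊗ₜ y))
  have h2 := congrArg (fun z => sgn K ((p + d) * (q + d)) • z) h
  simp only [smul_smul, sgn_sq, one_smul, smul_neg] at h2
  -- h2 : gflip (F (y ⊗ₜ x)) = -(sgn e • F (x ⊗ₜ y))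
  have h3 := congrArg (gflip 𝒜) h2
  rw [gflip_gflip, map_neg, map_smul] at h3
  exact h3

lemma L_T0 (a : A) (z : A ⊗[K] A) :
    mmm (Fleft F (a ⊗ₜ[K] z)) =
      LinearMap.mul' K A (LinearMap.rTensor A (braF F a) z) := by
  induction z using TensorProduct.induction_on with
  | zero => simp
  | tmul u v => rw [Fleft_tmul, mmm_assoc, LinearMap.rTensor_tmul, LinearMap.mul'_apply,
      braF_apply]
  | add u v hu hv => simp only [TensorProduct.tmul_add, map_add, hu, hv]

lemma L_T1
    (hdeg : ∀ (p q : ℤ) (a b : A), a ∈ 𝒜 p → b ∈ 𝒜 q →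
      F (a ⊗ₜ[K] b) ∈ degSub 𝒜 (p + q + d))
    {pb : ℤ} {b : A} (hb : b ∈ 𝒜 pb) (z : A ⊗[K] A) :
    mmm (P312 𝒜 (Fleft F (b ⊗ₜ[K] z))) =
      LinearMap.mul' K A (LinearMap.lTensor A (braF F b)
        (LinearMap.rTensor A (twist 𝒜 (pb + d)) (gflip 𝒜 z))) := by
  induction z using tmul_induction 𝒜 with
  | h0 => simp
  | hadd x y hx hy => simp only [TensorProduct.tmul_add, map_add, hx, hy]
  | hhom σ τ s t hs ht =>
    rw [Fleft_tmul, L_sub1 𝒜 ht _ (hdeg pb σ b s hb hs)]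
    rw [gflip_tmul 𝒜 hs ht, map_smul, LinearMap.rTensor_tmul, twist_apply 𝒜 (pb + d) ht]
    simp only [← TensorProduct.smul_tmul', map_smul, LinearMap.lTensor_tmul,
      LinearMap.mul'_apply, braF_apply, smul_smul, sgn_mul_sgn]
    refine congrArg (· • _) (congrArg (sgn K) ?_)
    ring

lemma L_T2
    (hdeg : ∀ (p q : ℤ) (a b : A), a ∈ 𝒜 p → b ∈ 𝒜 q →
      F (a ⊗ₜ[K] b) ∈ degSub 𝒜 (p + q + d))
    (hanti : gflip 𝒜 ∘ₗ F ∘ₗ P21d 𝒜 d = -F)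
    {pc : ℤ} {c : A} (hc : c ∈ 𝒜 pc) {n : ℤ} :
    ∀ z ∈ degSub 𝒜 n,
      mmm (P312 𝒜 (P312 𝒜 (Fleft F (c ⊗ₜ[K] z)))) =
        -(sgn K ((pc + d) * (n - d)) •
          mmm (P12 𝒜 (LinearMap.lTensor A (F ∘ₗ rmk c) (gflip 𝒜 z)))) := by
  refine degSub_induction 𝒜 (by simp) ?_ ?_ ?_
  · intro x y hx hy
    simp only [TensorProduct.tmul_add, map_add, hx, hy, smul_add, neg_add]
  · intro r x hx
    simp only [TensorProduct.tmul_smul, map_smul, hx, smul_neg, smul_comm r, smul_smul]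
  · intro ρ ω r w hn hr hw
    rw [Fleft_tmul, antisym_tmul 𝒜 d F hanti hr hc]
    simp only [TensorProduct.neg_tmul, ← TensorProduct.smul_tmul', map_neg, map_smul]
    rw [L_sub2 𝒜 hw (F (r ⊗ₜ[K] c)), L_sub3 𝒜 hw _ (hdeg ρ pc r c hr hc)]
    rw [gflip_tmul 𝒜 hr hw]
    simp only [map_smul, LinearMap.lTensor_tmul, LinearMap.comp_apply, rmk_apply,
      smul_smul, sgn_mul_sgn]
    refine congrArg (fun s => -(s • mmm (P12 𝒜 (w ⊗ₜ[K] F (r ⊗ₜ[K] c))))) ?_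
    refine sgn_congr ⟨d * d + pc * d, ?_⟩
    rw [← hn]; ring

end WithF


section WithF2
variable (d : ℤ) (F : A ⊗[K] A →ₗ[K] A ⊗[K] A)

lemma leib1
    (hL1 : ∀ (pa pb : ℤ) (a b c : A), a ∈ 𝒜 pa → b ∈ 𝒜 pb →
      F (a ⊗ₜ[K] (b * c)) =
        outR c (F (a ⊗ₜ[K] b)) + sgn K ((pa + d) * pb) • outL b (F (a ⊗ₜ[K] c)))
    {pa : ℤ} {a : A} (ha : a ∈ 𝒜 pa) (z : A ⊗[K] A) :
    LinearMap.mul' K A (F (a ⊗ₜ[K] (LinearMap.mul' K A z))) =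
      LinearMap.mul' K A (LinearMap.rTensor A (braF F a) z) +
        LinearMap.mul' K A (LinearMap.lTensor A (braF F a)
          (LinearMap.rTensor A (twist 𝒜 (pa + d)) z)) := by
  induction z using tmul_induction 𝒜 with
  | h0 => simp
  | hadd x y hx hy =>
    simp only [map_add, TensorProduct.tmul_add, hx, hy]
    abel
  | hhom i j u v hu hv =>
    rw [LinearMap.mul'_apply, hL1 pa i a u v ha hu, map_add, map_smul, mul'_outR,
      mul'_outL, LinearMap.rTensor_tmul, LinearMap.mul'_apply, braF_apply,
      LinearMap.rTensor_tmul, twist_apply 𝒜 (pa + d) hu]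
    simp only [← TensorProduct.smul_tmul', map_smul, LinearMap.lTensor_tmul,
      LinearMap.mul'_apply, braF_apply]
    refine congrArg₂ (· + ·) rfl (congrArg (· • _) (congrArg (sgn K) ?_))
    ring

lemma leib2
    (hdeg : ∀ (p q : ℤ) (a b : A), a ∈ 𝒜 p → b ∈ 𝒜 q →
      F (a ⊗ₜ[K] b) ∈ degSub 𝒜 (p + q + d))
    (hL2 : ∀ (pa pb pc : ℤ) (a b c : A), a ∈ 𝒜 pa → b ∈ 𝒜 pb → c ∈ 𝒜 pc →
      F ((a * b) ⊗ₜ[K] c) =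
        innL 𝒜 pa a (F (b ⊗ₜ[K] c)) +
          sgn K (pb * (pc + d)) • innR 𝒜 pb b (F (a ⊗ₜ[K] c)))
    {pc : ℤ} {c : A} (hc : c ∈ 𝒜 pc) (z : A ⊗[K] A) :
    LinearMap.mul' K A (F ((LinearMap.mul' K A z) ⊗ₜ[K] c)) =
      mmm (P12 𝒜 (LinearMap.lTensor A (F ∘ₗ rmk c) z)) +
        mmm (P12 𝒜 (LinearMap.lTensor A (F ∘ₗ rmk c) (gflip 𝒜 z))) := by
  induction z using tmul_induction 𝒜 with
  | h0 => simp
  | hadd x y hx hy =>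
    simp only [map_add, TensorProduct.add_tmul, hx, hy]
    abel
  | hhom ρ ω r w hr hw =>
    rw [LinearMap.mul'_apply, hL2 ρ ω pc r w c hr hw hc, map_add, map_smul,
      innL_mmm 𝒜 hr, innR_mmm 𝒜 hw _ (hdeg ρ pc r c hr hc)]
    rw [LinearMap.lTensor_tmul, LinearMap.comp_apply, rmk_apply]
    rw [gflip_tmul 𝒜 hr hw, map_smul, LinearMap.lTensor_tmul, LinearMap.comp_apply,
      rmk_apply, map_smul, map_smul, smul_smul, sgn_mul_sgn]
    refine congrArg₂ (· + ·) rfl (congrArg (· • _) ?_)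
    exact sgn_congr ⟨ω * (pc + d), by ring⟩

lemma keyE
    (hdeg : ∀ (p q : ℤ) (a b : A), a ∈ 𝒜 p → b ∈ 𝒜 q →
      F (a ⊗ₜ[K] b) ∈ degSub 𝒜 (p + q + d))
    (hanti : gflip 𝒜 ∘ₗ F ∘ₗ P21d 𝒜 d = -F)
    (htri : tribracket 𝒜 d F = 0)
    {pa pb pc : ℤ} {a b c : A} (ha : a ∈ 𝒜 pa) (hb : b ∈ 𝒜 pb) (hc : c ∈ 𝒜 pc) :
    LinearMap.mul' K A (LinearMap.rTensor A (braF F a) (F (b ⊗ₜ[K] c))) -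
      sgn K ((pa + d) * (pb + d)) •
        LinearMap.mul' K A (LinearMap.lTensor A (braF F b)
          (LinearMap.rTensor A (twist 𝒜 (pb + d)) (F (a ⊗ₜ[K] c)))) -
      mmm (P12 𝒜 (LinearMap.lTensor A (F ∘ₗ rmk c) (gflip 𝒜 (F (a ⊗ₜ[K] b))))) = 0 := by
  have h0 : mmm (Fleft F (LinearMap.lTensor A F (a ⊗ₜ[K] (b ⊗ₜ[K] c))))
      + mmm (P312 𝒜 (Fleft F (LinearMap.lTensor A F
          (P312d 𝒜 d (P312d 𝒜 d (a ⊗ₜ[K] (b ⊗ₜ[K] c)))))))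
      + mmm (P312 𝒜 (P312 𝒜 (Fleft F (LinearMap.lTensor A F
          (P312d 𝒜 d (a ⊗ₜ[K] (b ⊗ₜ[K] c))))))) = 0 := by
    have h := LinearMap.congr_fun htri (a ⊗ₜ[K] (b ⊗ₜ[K] c))
    simp only [tribracket, LinearMap.add_apply, LinearMap.comp_apply,
      LinearMap.zero_apply] at h
    have h2 := congrArg mmm h
    simpa only [map_add, map_zero] using h2
  rw [LinearMap.lTensor_tmul, L_T0 F a] at h0
  rw [P312d_tmul 𝒜 d ha hb hc] at h0
  simp only [map_smul] at h0
  rw [P312d_tmul 𝒜 d hc ha hb] at h0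
  simp only [map_smul, LinearMap.lTensor_tmul] at h0
  rw [L_T1 𝒜 d F hdeg hb (F (c ⊗ₜ[K] a)), antisym_tmul 𝒜 d F hanti ha hc,
    L_T2 𝒜 d F hdeg hanti hc _ (hdeg pa pb a b ha hb)] at h0
  simp only [map_neg, map_smul, gflip_gflip, smul_neg, smul_smul, sgn_mul_sgn] at h0
  have hs1 : sgn K ((pc + d) * (pa + pb) + ((pb + d) * (pc + pa) + (pa + d) * (pc + d)))
      = sgn K ((pa + d) * (pb + d)) :=
    sgn_congr ⟨pa * pc + pa * d + pb * pc + pc * d, by ring⟩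
  have hs2 : sgn K ((pc + d) * (pa + pb) + (pc + d) * (pa + pb + d - d)) = 1 :=
    sgn_even ⟨(pc + d) * (pa + pb), by ring⟩
  rw [hs1, hs2, one_smul] at h0
  rw [sub_eq_add_neg, sub_eq_add_neg]
  exact h0
end WithF2


/-- for a Gerstenhaber bibracket of degree `d` (a `d`-antisymmetric
`d`-graded bibracket of degree `d` with vanishing induced tribracket), the associated
bracket satisfies `⟨⟨a,b⟩,c⟩ = ⟨a,⟨b,c⟩⟩ - (-1)^{(|a|+d)(|b|+d)} ⟨b,⟨a,c⟩⟩`. -/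
theorem stmt18 (d : ℤ) (F : A ⊗[K] A →ₗ[K] A ⊗[K] A)
    (hdeg : ∀ (p q : ℤ) (a b : A), a ∈ 𝒜 p → b ∈ 𝒜 q →
      F (a ⊗ₜ[K] b) ∈ degSub 𝒜 (p + q + d))
    (hL1 : ∀ (pa pb : ℤ) (a b c : A), a ∈ 𝒜 pa → b ∈ 𝒜 pb →
      F (a ⊗ₜ[K] (b * c)) =
        outR c (F (a ⊗ₜ[K] b)) + sgn K ((pa + d) * pb) • outL b (F (a ⊗ₜ[K] c)))
    (hL2 : ∀ (pa pb pc : ℤ) (a b c : A), a ∈ 𝒜 pa → b ∈ 𝒜 pb → c ∈ 𝒜 pc →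
      F ((a * b) ⊗ₜ[K] c) =
        innL 𝒜 pa a (F (b ⊗ₜ[K] c)) +
          sgn K (pb * (pc + d)) • innR 𝒜 pb b (F (a ⊗ₜ[K] c)))
    (hanti : gflip 𝒜 ∘ₗ F ∘ₗ P21d 𝒜 d = -F)
    (htri : tribracket 𝒜 d F = 0) :
    ∀ (pa pb pc : ℤ) (a b c : A), a ∈ 𝒜 pa → b ∈ 𝒜 pb → c ∈ 𝒜 pc →
      LinearMap.mul' K A (F ((LinearMap.mul' K A (F (a ⊗ₜ[K] b))) ⊗ₜ[K] c)) =
        LinearMap.mul' K A (F (a ⊗ₜ[K] (LinearMap.mul' K A (F (b ⊗ₜ[K] c))))) -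
          sgn K ((pa + d) * (pb + d)) •
            LinearMap.mul' K A (F (b ⊗ₜ[K] (LinearMap.mul' K A (F (a ⊗ₜ[K] c))))) := by
  intro pa pb pc a b c ha hb hc
  have h1 := keyE 𝒜 d F hdeg hanti htri ha hb hc
  have h2 := keyE 𝒜 d F hdeg hanti htri hb ha hc
  rw [antisym_tmul 𝒜 d F hanti ha hb] at h2
  simp only [map_neg, map_smul, gflip_gflip, sub_neg_eq_add] at h2
  rw [mul_comm (pb + d) (pa + d)] at h2
  have h3 := congrArg (fun x => sgn K ((pa + d) * (pb + d)) • x) h2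
  simp only [smul_zero, smul_sub, smul_add, smul_smul, sgn_sq, one_smul] at h3
  rw [leib2 𝒜 d F hdeg hL2 hc (F (a ⊗ₜ[K] b)), leib1 𝒜 d F hL1 ha (F (b ⊗ₜ[K] c)),
    leib1 𝒜 d F hL1 hb (F (a ⊗ₜ[K] c))]
  rw [← sub_eq_zero]
  rw [smul_add]
  linear_combination (norm := abel) h3 - h1
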